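/- Let A = F_q[θ]. For all N ≥ 0 and s ≥ 1, applying ∂/∂X_{s+1} ⋯ ∂/∂X_{s+N+1} to the special polynomial S_{s+N+1}(X_1,…,X_{s+N+1},Z) yields the element L(−N,s,z)·(X_1⋯X_s), where L(−N,s,z) = Σ_{d≥0} z^d Σ_{a ∈ A_{+,d}} a(t_1)⋯a(t_s)·a^N ∈ A[t_1,…,t_s,z] acts on X_1⋯X_s via t_j·F = F(X_1,…,C_θ(X_j),…,X_s), z·Z^k-grading matching Z^{q^d} with z^d. -/

import Mathlib

noncomputable section

/-- The monic polynomial of degree `d` with lower coefficients `c`. -/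
def monicOf (Fq : Type) [Field Fq] (d : ℕ) (c : Fin d → Fq) : Polynomial Fq :=
  Polynomial.X ^ d + ∑ i : Fin d, Polynomial.C (c i) * Polynomial.X ^ (i : ℕ)

/-- `C_θ(X) = θ·X + X^q`. -/
def carlitzTheta (Fq : Type) [Field Fq] [Fintype Fq] : Polynomial (Polynomial Fq) :=
  Polynomial.C Polynomial.X * Polynomial.X + Polynomial.X ^ (Fintype.card Fq)

/-- `C_{θ^n}(X)`, the `n`-fold composition of `C_θ`. -/
def carlitzThetaPow (Fq : Type) [Field Fq] [Fintype Fq] : ℕ → Polynomial (Polynomial Fq)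
  | 0 => Polynomial.X
  | n + 1 => (carlitzTheta Fq).comp (carlitzThetaPow Fq n)

/-- The Carlitz module: `C_a(X) = ∑ c_i C_{θ^i}(X)` for `a = ∑ c_i θ^i`. -/
def carlitz (Fq : Type) [Field Fq] [Fintype Fq] (a : Polynomial Fq) :
    Polynomial (Polynomial Fq) :=
  ∑ i ∈ a.support, Polynomial.C (Polynomial.C (a.coeff i)) * carlitzThetaPow Fq i

/-- `D_i`: `D_0 = 1`, `D_i = (θ^{q^i} − θ)·D_{i−1}^q`. -/
def DPoly (Fq : Type) [Field Fq] [Fintype Fq] : ℕ → Polynomial Fq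
  | 0 => 1
  | i + 1 => ((Polynomial.X : Polynomial Fq) ^ (Fintype.card Fq ^ (i + 1)) - Polynomial.X) *
      (DPoly Fq i) ^ (Fintype.card Fq)

/-- The Carlitz `*`-action: `a*F = F(C_a(X_1),…,C_a(X_s))` for
`F ∈ A[X_1,…,X_s]`. -/
def starAction (Fq : Type) [Field Fq] [Fintype Fq] (s : ℕ) (a : Polynomial Fq)
    (F : MvPolynomial (Fin s) (Polynomial Fq)) : MvPolynomial (Fin s) (Polynomial Fq) :=
  MvPolynomial.bind₁
    (fun j => Polynomial.aeval (MvPolynomial.X j : MvPolynomial (Fin s) (Polynomial Fq))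
      (carlitz Fq a)) F

/-- `L_d(F) = ∑_{a ∈ A_{+,d}} (a*F)/a ∈ K[X_1,…,X_s]`. -/
def LFcoeff (Fq : Type) [Field Fq] [Fintype Fq] (s : ℕ)
    (F : MvPolynomial (Fin s) (Polynomial Fq)) (d : ℕ) :
    MvPolynomial (Fin s) (RatFunc Fq) :=
  ∑ c : Fin d → Fq,
    MvPolynomial.C ((algebraMap (Polynomial Fq) (RatFunc Fq) (monicOf Fq d c))⁻¹) *
      MvPolynomial.map (algebraMap (Polynomial Fq) (RatFunc Fq))
        (starAction Fq s (monicOf Fq d c) F)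

/-- The series `ℓ(F,Z) = ∑_{d ≥ 0} Z^{q^d} L_d(F) ∈ K[X_1,…,X_s][[Z]]`. -/
def ellSeries (Fq : Type) [Field Fq] [Fintype Fq] (s : ℕ)
    (F : MvPolynomial (Fin s) (Polynomial Fq)) :
    PowerSeries (MvPolynomial (Fin s) (RatFunc Fq)) :=
  PowerSeries.mk fun n =>
    ∑ d ∈ (Finset.range (n + 1)).filter (fun d => Fintype.card Fq ^ d = n),
      LFcoeff Fq s F d

/-- `exp_C(ℓ(F,Z)) = ∑_{i ≥ 0} D_i^{−1} ℓ(F,Z)^{q^i}`, computed coefficientwise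
(the coefficient of `Z^n` only receives contributions from `i ≤ n`). -/
def expEll (Fq : Type) [Field Fq] [Fintype Fq] (s : ℕ)
    (F : MvPolynomial (Fin s) (Polynomial Fq)) :
    PowerSeries (MvPolynomial (Fin s) (RatFunc Fq)) :=
  PowerSeries.mk fun n =>
    ∑ i ∈ Finset.range (n + 1),
      MvPolynomial.C ((algebraMap (Polynomial Fq) (RatFunc Fq) (DPoly Fq i))⁻¹) *
        PowerSeries.coeff n ((ellSeries Fq s F) ^ (Fintype.card Fq ^ i))

/-- The multivariable special polynomial
`S_m(X,Z) = exp_C(∑_{a monic} a*(X_1⋯X_m Z)/a)` in `m` variables, as a power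
series in `Z` over `K[X_1,…,X_m]`. -/
def SSeries (Fq : Type) [Field Fq] [Fintype Fq] (m : ℕ) :
    PowerSeries (MvPolynomial (Fin m) (RatFunc Fq)) :=
  expEll Fq m (∏ j : Fin m, MvPolynomial.X j)

/-- The operator `∂/∂X_{s+1} ⋯ ∂/∂X_{s+N+1}` on `K[X_1,…,X_{s+N+1}]`. -/
def derivOp (Fq : Type) [Field Fq] [Fintype Fq] (s N : ℕ)
    (f : MvPolynomial (Fin (s + (N + 1))) (RatFunc Fq)) :
    MvPolynomial (Fin (s + (N + 1))) (RatFunc Fq) :=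
  (List.finRange (N + 1)).foldr
    (fun j acc => MvPolynomial.pderiv (Fin.natAdd s j) acc) f

/-- The `Z^n`-coefficient of the series `L(−N,s,z)·(X_1⋯X_s)`, namely
`∑_{q^d = n} ∑_{a ∈ A_{+,d}} a^N · C_a(X_1)⋯C_a(X_s)` (viewed inside the
polynomial ring in `s + N + 1` variables, only the first `s` being used). -/
def LNegActionCoeff (Fq : Type) [Field Fq] [Fintype Fq] (s N n : ℕ) :
    MvPolynomial (Fin (s + (N + 1))) (RatFunc Fq) :=
  ∑ d ∈ (Finset.range (n + 1)).filter (fun d => Fintype.card Fq ^ d = n),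
    ∑ c : Fin d → Fq,
      MvPolynomial.C ((algebraMap (Polynomial Fq) (RatFunc Fq) (monicOf Fq d c)) ^ N) *
        ∏ j : Fin s,
          MvPolynomial.map (algebraMap (Polynomial Fq) (RatFunc Fq))
            (Polynomial.aeval
              (MvPolynomial.X (Fin.castAdd (N + 1) j) :
                MvPolynomial (Fin (s + (N + 1))) (Polynomial Fq))
              (carlitz Fq (monicOf Fq d c)))


section Aux
open MvPolynomial

variable (Fq : Type) [Field Fq] [Fintype Fq]

lemma card_cast_zero {R : Type*} [Semiring R] (f : Fq →+* R) :
    ((Fintype.card Fq : ℕ) : R) = 0 := by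
  rw [← map_natCast f, FiniteField.cast_card_eq_zero, map_zero]

lemma derivative_carlitzThetaPow (i : ℕ) :
    Polynomial.derivative (carlitzThetaPow Fq i) = Polynomial.C (Polynomial.X ^ i) := by
  induction i with
  | zero => simp [carlitzThetaPow]
  | succ n ih =>
      have hq : ((Fintype.card Fq : ℕ) : Polynomial Fq) = 0 :=
        card_cast_zero Fq Polynomial.C
      have hdC : Polynomial.derivative (carlitzTheta Fq) = Polynomial.C Polynomial.X := by
        rw [carlitzTheta, Polynomial.derivative_add, Polynomial.derivative_C_mul,
          Polynomial.derivative_X, Polynomial.derivative_X_pow, hq]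
        simp
      rw [carlitzThetaPow, Polynomial.derivative_comp, ih, hdC, Polynomial.C_comp]
      rw [← Polynomial.C_mul, ← pow_succ]

lemma derivative_carlitz (a : Polynomial Fq) :
    Polynomial.derivative (carlitz Fq a) = Polynomial.C a := by
  rw [carlitz, map_sum]
  simp only [Polynomial.derivative_C_mul, derivative_carlitzThetaPow, ← Polynomial.C_mul]
  rw [← map_sum]
  congr 1
  conv_rhs => rw [← Polynomial.sum_C_mul_X_pow_eq a]
  rfl

section PD
variable {σ : Type*} {R : Type*} [CommRing R] [DecidableEq σ]
open MvPolynomial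

lemma pderiv_aeval_self (P : Polynomial R) (j : σ) :
    pderiv j (Polynomial.aeval (X j : MvPolynomial σ R) P) =
      Polynomial.aeval (X j : MvPolynomial σ R) (Polynomial.derivative P) := by
  rw [Derivation.map_aeval, pderiv_X_self, smul_eq_mul, mul_one]

lemma pderiv_aeval_ne (P : Polynomial R) {i j : σ} (h : j ≠ i) :
    pderiv i (Polynomial.aeval (X j : MvPolynomial σ R) P) = 0 := by
  rw [Derivation.map_aeval, pderiv_X_of_ne h, smul_zero]

lemma pderiv_prod_zero {T : Finset σ} {F : σ → MvPolynomial σ R} {i : σ}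
    (h : ∀ j ∈ T, pderiv i (F j) = 0) : pderiv i (∏ j ∈ T, F j) = 0 := by
  classical
  induction T using Finset.induction_on with
  | empty => simp
  | @insert x T' hx ih =>
      rw [Finset.prod_insert hx, pderiv_mul, h x (Finset.mem_insert_self x T'),
        ih fun j hj => h j (Finset.mem_insert_of_mem hj)]
      ring

lemma pderiv_prod_single {T : Finset σ} {F : σ → MvPolynomial σ R} {i : σ}
    (hi : i ∈ T) (h : ∀ j ∈ T, j ≠ i → pderiv i (F j) = 0) :
    pderiv i (∏ j ∈ T, F j) = pderiv i (F i) * ∏ j ∈ T.erase i, F j := by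
  classical
  rw [← Finset.mul_prod_erase T F hi, pderiv_mul,
    pderiv_prod_zero (fun j hj => h j (Finset.mem_of_mem_erase hj) (Finset.ne_of_mem_erase hj))]
  ring

lemma foldr_pderiv_prod (H : σ → MvPolynomial σ R) (u : R)
    (hne : ∀ i j : σ, i ≠ j → pderiv i (H j) = 0) :
    ∀ (l : List σ), l.Nodup → ∀ (T : Finset σ), (∀ i ∈ l, i ∈ T) →
    (∀ i ∈ l, pderiv i (H i) = C u) →
    l.foldr (fun j acc => pderiv j acc) (∏ j ∈ T, H j) =
      C u ^ l.length * ∏ j ∈ T \ l.toFinset, H j := by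
  classical
  intro l
  induction l with
  | nil => intro _ T _ _; simp
  | cons a l ih =>
      intro hnd T hsub hself
      have hal : a ∉ l := (List.nodup_cons.mp hnd).1
      rw [List.foldr_cons, ih (List.nodup_cons.mp hnd).2 T
        (fun i hi => hsub i (List.mem_cons_of_mem a hi))
        (fun i hi => hself i (List.mem_cons_of_mem a hi))]
      have hconst : (C u ^ l.length : MvPolynomial σ R) = C (u ^ l.length) := by
        rw [map_pow]
      rw [hconst, pderiv_C_mul]
      have haT : a ∈ T \ l.toFinset := by
        rw [Finset.mem_sdiff]
        exact ⟨hsub a (List.mem_cons_self), fun hc => hal (List.mem_toFinset.mp hc)⟩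
      rw [pderiv_prod_single haT (fun j _ hj => hne a j (Ne.symm hj)),
        hself a (List.mem_cons_self)]
      have : (T \ l.toFinset).erase a = T \ (a :: l).toFinset := by
        ext x
        simp only [Finset.mem_erase, Finset.mem_sdiff, List.toFinset_cons, Finset.mem_insert,
          List.mem_toFinset]
        tauto
      rw [this, List.length_cons, ← hconst]
      ring

end PD

section PS
variable {σ : Type*} {R : Type*} [CommRing R]
open MvPolynomial

/-- Coefficientwise `pderiv` as a derivation on power series. -/
def pdSeries (j : σ) :
    Derivation ℕ (PowerSeries (MvPolynomial σ R)) (PowerSeries (MvPolynomial σ R)) where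
  toFun f := PowerSeries.mk fun n => pderiv j (PowerSeries.coeff n f)
  map_add' f g := by
    apply PowerSeries.ext; intro n
    simp [PowerSeries.coeff_mk]
  map_smul' c f := by
    apply PowerSeries.ext; intro n
    simp only [RingHom.id_apply, PowerSeries.coeff_mk, map_nsmul]
    exact (congrArg (pderiv j) (map_nsmul (PowerSeries.coeff n) c f)).trans (map_nsmul _ _ _)
  map_one_eq_zero' := by
    apply PowerSeries.ext; intro n
    simp only [LinearMap.coe_mk, AddHom.coe_mk, PowerSeries.coeff_mk, PowerSeries.coeff_one,
      map_zero]
    split_ifs <;> simp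
  leibniz' f g := by
    apply PowerSeries.ext; intro n
    simp only [LinearMap.coe_mk, AddHom.coe_mk, PowerSeries.coeff_mk, smul_eq_mul, map_add,
      PowerSeries.coeff_mul, map_sum, pderiv_mul]
    rw [Finset.sum_add_distrib, add_comm]
    congr 1
    rw [← Finset.Nat.sum_antidiagonal_swap]
    apply Finset.sum_congr rfl
    intro p _
    simp [mul_comm]

lemma pderiv_coeff (j : σ) (f : PowerSeries (MvPolynomial σ R)) (n : ℕ) :
    pderiv j (PowerSeries.coeff n f) = PowerSeries.coeff n (pdSeries (R := R) j f) := by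
  show _ = PowerSeries.coeff n (PowerSeries.mk fun n => pderiv j (PowerSeries.coeff n f))
  rw [PowerSeries.coeff_mk]

end PS

section Fold
variable {σ : Type*} {κ : Type*} {R : Type*} [CommRing R]
open MvPolynomial

lemma pderiv_coeff_pow_zero (j : σ) {q : ℕ} (hq : (q : R) = 0)
    (f : PowerSeries (MvPolynomial σ R)) (n : ℕ) :
    pderiv j (PowerSeries.coeff n (f ^ q)) = 0 := by
  have hq' : (q : PowerSeries (MvPolynomial σ R)) = 0 := by
    have := map_natCast ((PowerSeries.C (R := MvPolynomial σ R)).comp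
      (MvPolynomial.C : R →+* MvPolynomial σ R)) q
    rw [← this, hq, map_zero]
  have h0 : (pdSeries (R := R) j) (f ^ q) = 0 := by
    rw [Derivation.leibniz_pow, nsmul_eq_mul, hq', zero_mul]
  rw [pderiv_coeff, h0, map_zero]

lemma foldr_pderiv_zero (g : κ → σ) (l : List κ) :
    l.foldr (fun j acc => pderiv (g j) acc) (0 : MvPolynomial σ R) = 0 := by
  induction l with
  | nil => rfl
  | cons a l ih => rw [List.foldr_cons, ih, map_zero]

lemma foldr_pderiv_eq_zero (g : κ → σ) {l : List κ} (hl : l ≠ [])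
    {f : MvPolynomial σ R} (h : ∀ j, pderiv (g j) f = 0) :
    l.foldr (fun j acc => pderiv (g j) acc) f = 0 := by
  induction l with
  | nil => exact absurd rfl hl
  | cons a l ih =>
      rcases eq_or_ne l [] with rfl | hne
      · simpa using h a
      · rw [List.foldr_cons, ih hne, map_zero]

lemma foldr_pderiv_sum (g : κ → σ) (l : List κ) {ι : Type*} (T : Finset ι)
    (f : ι → MvPolynomial σ R) :
    l.foldr (fun j acc => pderiv (g j) acc) (∑ i ∈ T, f i) =
      ∑ i ∈ T, l.foldr (fun j acc => pderiv (g j) acc) (f i) := by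
  induction l with
  | nil => rfl
  | cons a l ih => simp only [List.foldr_cons, ih, map_sum]

lemma foldr_pderiv_C_mul (g : κ → σ) (l : List κ) (c : R) (f : MvPolynomial σ R) :
    l.foldr (fun j acc => pderiv (g j) acc) (C c * f) =
      C c * l.foldr (fun j acc => pderiv (g j) acc) f := by
  induction l with
  | nil => rfl
  | cons a l ih => simp only [List.foldr_cons, ih, pderiv_C_mul]

end Fold


lemma monicOf_ne_zero (Fq : Type) [Field Fq] (d : ℕ) (c : Fin d → Fq) :
    monicOf Fq d c ≠ 0 := by
  intro h
  have h1 : (monicOf Fq d c).coeff d = 1 := by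
    rw [monicOf, Polynomial.coeff_add, Polynomial.coeff_X_pow, if_pos rfl,
      Polynomial.finset_sum_coeff]
    simp only [Polynomial.coeff_C_mul, Polynomial.coeff_X_pow]
    rw [Finset.sum_eq_zero, add_zero]
    intro i _
    rw [if_neg (by have := i.2; omega : ¬ d = (i : ℕ)), mul_zero]
  rw [h, Polynomial.coeff_zero] at h1
  exact zero_ne_one h1

lemma starAction_prod_X (Fq : Type) [Field Fq] [Fintype Fq] (m : ℕ) (a : Polynomial Fq) :
    starAction Fq m a (∏ j : Fin m, MvPolynomial.X j) =
      ∏ j : Fin m, Polynomial.aeval (MvPolynomial.X j : MvPolynomial (Fin m) (Polynomial Fq))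
        (carlitz Fq a) := by
  rw [starAction, map_prod]
  simp [MvPolynomial.bind₁_X_right]

end Aux

/-- For all `N ≥ 0`, `s ≥ 1`, applying
`∂/∂X_{s+1} ⋯ ∂/∂X_{s+N+1}` to `S_{s+N+1}(X_1,…,X_{s+N+1},Z)` yields
`L(−N,s,z)·(X_1⋯X_s)` (coefficientwise in the `Z`-grading matching `Z^{q^d}`
with `z^d`). -/
theorem stmt_19 (Fq : Type) [Field Fq] [Fintype Fq] (s N : ℕ) (hs : 1 ≤ s) :
    ∀ n : ℕ,
      derivOp Fq s N (PowerSeries.coeff n (SSeries Fq (s + (N + 1)))) =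
        LNegActionCoeff Fq s N n := by
  classical
  intro n
  have hq0 : ((Fintype.card Fq : ℕ) : RatFunc Fq) = 0 :=
    card_cast_zero Fq ((algebraMap (Polynomial Fq) (RatFunc Fq)).comp Polynomial.C)
  have hlnil : (List.finRange (N + 1)) ≠ [] := by
    intro h
    have : (List.finRange (N + 1)).length = N + 1 := List.length_finRange
    rw [h] at this
    simp at this
  rw [SSeries, expEll, PowerSeries.coeff_mk]
  simp only [derivOp]
  rw [foldr_pderiv_sum, Finset.sum_range_succ']
  have hvanish : ∀ i ∈ Finset.range n,
      (List.finRange (N + 1)).foldr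
        (fun j acc => MvPolynomial.pderiv (Fin.natAdd s j) acc)
        (MvPolynomial.C ((algebraMap (Polynomial Fq) (RatFunc Fq) (DPoly Fq (i + 1)))⁻¹) *
          PowerSeries.coeff n
            ((ellSeries Fq (s + (N + 1)) (∏ j : Fin (s + (N + 1)), MvPolynomial.X j)) ^
              (Fintype.card Fq ^ (i + 1)))) = 0 := by
    intro i _
    rw [foldr_pderiv_C_mul, foldr_pderiv_eq_zero (Fin.natAdd s) hlnil, mul_zero]
    intro j
    rw [pow_succ, pow_mul]
    exact pderiv_coeff_pow_zero _ hq0 _ n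
  rw [Finset.sum_eq_zero hvanish, zero_add]
  rw [show DPoly Fq 0 = 1 from rfl, map_one, inv_one, map_one, one_mul, pow_zero, pow_one]
  rw [ellSeries, PowerSeries.coeff_mk, foldr_pderiv_sum, LNegActionCoeff]
  apply Finset.sum_congr rfl
  intro d _
  rw [LFcoeff, foldr_pderiv_sum]
  apply Finset.sum_congr rfl
  intro c _
  set a : Polynomial Fq := monicOf Fq d c with ha
  set ab : RatFunc Fq := algebraMap (Polynomial Fq) (RatFunc Fq) a with hab
  have hab0 : ab ≠ 0 := RatFunc.algebraMap_ne_zero (monicOf_ne_zero Fq d c)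
  set H : Fin (s + (N + 1)) → MvPolynomial (Fin (s + (N + 1))) (RatFunc Fq) := fun j =>
    MvPolynomial.map (algebraMap (Polynomial Fq) (RatFunc Fq))
      (Polynomial.aeval (MvPolynomial.X j :
        MvPolynomial (Fin (s + (N + 1))) (Polynomial Fq)) (carlitz Fq a)) with hH
  have hself : ∀ j, MvPolynomial.pderiv j (H j) = MvPolynomial.C ab := by
    intro j
    rw [hH]
    rw [MvPolynomial.pderiv_map, pderiv_aeval_self, derivative_carlitz, Polynomial.aeval_C,
      MvPolynomial.algebraMap_eq, MvPolynomial.map_C]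
  have hne : ∀ i j, i ≠ j → MvPolynomial.pderiv i (H j) = 0 := by
    intro i j hij
    rw [hH]
    rw [MvPolynomial.pderiv_map, pderiv_aeval_ne _ (Ne.symm hij), map_zero]
  rw [starAction_prod_X, map_prod, foldr_pderiv_C_mul]
  have hnodup : ((List.finRange (N + 1)).map (Fin.natAdd s)).Nodup := by
    refine (List.nodup_finRange (N + 1)).map ?_
    intro x y hxy
    have : s + (x : ℕ) = s + (y : ℕ) := congrArg Fin.val hxy
    exact Fin.ext (by omega)
  have hfold := foldr_pderiv_prod H ab hne ((List.finRange (N + 1)).map (Fin.natAdd s)) hnodup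
    Finset.univ (fun i _ => Finset.mem_univ i) (fun i _ => hself i)
  rw [List.foldr_map] at hfold
  rw [hfold]
  have hset : (Finset.univ : Finset (Fin (s + (N + 1)))) \
      ((List.finRange (N + 1)).map (Fin.natAdd s)).toFinset =
      Finset.univ.image (Fin.castAdd (N + 1)) := by
    ext x
    simp only [Finset.mem_sdiff, Finset.mem_univ, true_and, List.mem_toFinset, List.mem_map,
      List.mem_finRange, true_iff, Finset.mem_image, exists_true_left]
    constructor
    · intro h
      have hx : (x : ℕ) < s := by
        by_contra hc
        exact h ⟨⟨(x : ℕ) - s, by have := x.2; omega⟩, Fin.ext (by simp; omega)⟩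
      exact ⟨⟨(x : ℕ), hx⟩, Fin.ext (by simp)⟩
    · rintro ⟨j, rfl⟩ ⟨k, hk⟩
      have h1 : s + (k : ℕ) = (j : ℕ) := congrArg Fin.val hk
      have := j.2
      omega
  rw [hset, List.length_map, List.length_finRange,
    Finset.prod_image (fun x _ y _ h => Fin.castAdd_injective _ _ h)]
  have h2 : ab⁻¹ * ab ^ (N + 1) = ab ^ N := by
    field_simp [pow_succ]
    ring
  rw [← mul_assoc, ← map_pow, ← map_mul, h2]

end
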